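/- Fix N ≥ 1 and ν ∈ ℝ. There exists a constant C > 0 such that for every ε ∈ (0,1) and every twice continuously differentiable function w : ℝ^N → ℝ for which sup_{x} (1+|x|²)^{-ν/2} |w(x)| is finite, one has sup_{x ∈ ℝ^N} (1+|x|²)^{-ν/2} |w(x)| ≤ C · sup_{x ∈ ℝ^N} (1+|x|²)^{-ν/2} |ε² Δw(x) - 2 w(x)|. -/

import Mathlib

open Real Filter Set


/-- The Euclidean Laplacian of a function on `ℝ^N`, as the sum of second partial
derivatives in the coordinate directions. -/
noncomputable def lap {N : ℕ} (u : EuclideanSpace ℝ (Fin N) → ℝ)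
    (x : EuclideanSpace ℝ (Fin N)) : ℝ :=
  ∑ i, fderiv ℝ (fun y => fderiv ℝ u y (EuclideanSpace.single i 1)) x (EuclideanSpace.single i 1)

noncomputable def bar {N : ℕ} (b p : ℝ) (x : EuclideanSpace ℝ (Fin N)) : ℝ :=
  (b + ‖x‖ ^ 2) ^ p

lemma fderiv_apply_contDiff {N : ℕ} {u : EuclideanSpace ℝ (Fin N) → ℝ}
    (hu : ContDiff ℝ 2 u) (e : EuclideanSpace ℝ (Fin N)) :
    ContDiff ℝ 1 (fun y => fderiv ℝ u y e) :=
  (hu.fderiv_right (by norm_num)).clm_apply contDiff_const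

/-- 1D second derivative test at a local max. -/
lemma secondDerivTest {g g' : ℝ → ℝ} {c : ℝ}
    (hg : ∀ t, HasDerivAt g (g' t) t) (hg' : HasDerivAt g' c 0)
    (hmax : IsLocalMax g 0) : c ≤ 0 := by
  by_contra hc
  push_neg at hc
  have h0 : g' 0 = 0 := by
    have h := hmax.deriv_eq_zero
    rwa [(hg 0).deriv] at h
  have hslope : Tendsto (fun t => g' t / t) (nhdsWithin 0 {(0:ℝ)}ᶜ) (nhds c) := by
    have h := hasDerivAt_iff_tendsto_slope.mp hg'
    have heq : (fun t => g' t / t) =ᶠ[nhdsWithin 0 {(0:ℝ)}ᶜ] slope g' 0 := by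
      filter_upwards with t
      simp [slope_def_field, h0]
    exact Tendsto.congr' heq.symm h
  have hpos : ∀ᶠ t in nhdsWithin 0 {(0:ℝ)}ᶜ, 0 < g' t / t :=
    hslope.eventually (eventually_gt_nhds hc)
  have hpos' : ∀ᶠ t in nhdsWithin (0:ℝ) (Set.Iio 0), g' t < 0 := by
    have h1 : ∀ᶠ t in nhdsWithin (0:ℝ) (Set.Iio 0), 0 < g' t / t :=
      hpos.filter_mono (nhdsWithin_mono 0 (fun t ht => ne_of_lt ht))
    have h2 : ∀ᶠ t in nhdsWithin (0:ℝ) (Set.Iio 0), t < 0 :=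
      eventually_mem_nhdsWithin
    filter_upwards [h1, h2] with t h1 h2
    by_contra hge
    push_neg at hge
    have : g' t / t ≤ 0 := div_nonpos_of_nonneg_of_nonpos hge h2.le
    linarith
  have hmax' : ∀ᶠ t in nhdsWithin (0:ℝ) (Set.Iio 0), g t ≤ g 0 :=
    hmax.filter_mono nhdsWithin_le_nhds
  obtain ⟨l, hl, hsub⟩ :=
    mem_nhdsLT_iff_exists_Ioo_subset.mp (hpos'.and hmax')
  have hl0 : l < 0 := hl
  set t : ℝ := l / 2 with ht
  have htmem : t ∈ Ioo l 0 := ⟨by linarith, by linarith⟩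
  have ht0 : t < 0 := htmem.2
  obtain ⟨ξ, hξ, hξeq⟩ := exists_hasDerivAt_eq_slope g g' ht0
    (fun x _ => (hg x).continuousAt.continuousWithinAt)
    (fun x _ => hg x)
  have hξmem : ξ ∈ Ioo l 0 := ⟨by linarith [hξ.1], hξ.2⟩
  have hneg : g' ξ < 0 := (hsub hξmem).1
  have hle : g t ≤ g 0 := (hsub htmem).2
  rw [hξeq] at hneg
  have : 0 < 0 - t := by linarith
  have := div_nonneg (by linarith : (0:ℝ) ≤ g 0 - g t) this.le
  linarith






lemma lap_nonpos_of_max {N : ℕ} {u : EuclideanSpace ℝ (Fin N) → ℝ}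
    (hu : ContDiff ℝ 2 u) {x₀ : EuclideanSpace ℝ (Fin N)} (hmax : ∀ x, u x ≤ u x₀) :
    lap u x₀ ≤ 0 := by
  apply Finset.sum_nonpos
  intro i _
  set e : EuclideanSpace ℝ (Fin N) := EuclideanSpace.single i 1 with he
  have hud : Differentiable ℝ u := hu.differentiable (by norm_num)
  have hF : ContDiff ℝ 1 (fun y => fderiv ℝ u y e) := fderiv_apply_contDiff hu e
  have hline : ∀ t : ℝ, HasDerivAt (fun s : ℝ => x₀ + s • e) e t := by
    intro t
    simpa using ((hasDerivAt_id t).smul_const e).const_add x₀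
  have hg : ∀ t : ℝ, HasDerivAt (fun s : ℝ => u (x₀ + s • e))
      (fderiv ℝ u (x₀ + t • e) e) t :=
    fun t => (hud (x₀ + t • e)).hasFDerivAt.comp_hasDerivAt t (hline t)
  have hg' : HasDerivAt (fun t => fderiv ℝ u (x₀ + t • e) e)
      (fderiv ℝ (fun y => fderiv ℝ u y e) x₀ e) (0:ℝ) := by
    have h := ((hF.differentiable (by norm_num)) (x₀ + (0:ℝ) • e)).hasFDerivAt.comp_hasDerivAt
      (0:ℝ) (hline 0)
    simpa [Function.comp_def] using h
  have hmax' : IsLocalMax (fun s : ℝ => u (x₀ + s • e)) 0 := by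
    apply IsMaxOn.isLocalMax (s := Set.univ)
    · intro t _
      simp only
      simpa using hmax (x₀ + t • e)
    · exact Filter.univ_mem
  exact secondDerivTest hg hg' hmax'





lemma bar_pos {N : ℕ} {b : ℝ} (hb : 0 < b) (p : ℝ) (x : EuclideanSpace ℝ (Fin N)) :
    0 < bar b p x :=
  Real.rpow_pos_of_pos (by positivity) p

lemma base_pos {N : ℕ} {b : ℝ} (hb : 0 < b) (x : EuclideanSpace ℝ (Fin N)) :
    0 < b + ‖x‖ ^ 2 := by positivity

lemma bar_contDiff {N : ℕ} {b : ℝ} (hb : 0 < b) (p : ℝ) :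
    ContDiff ℝ 2 (bar (N := N) b p) := by
  rw [contDiff_iff_contDiffAt]
  intro y
  exact (Real.contDiffAt_rpow_const_of_ne (ne_of_gt (base_pos hb y))).comp y
    (contDiffAt_const.add ((contDiff_norm_sq ℝ).contDiffAt))

lemma bar_hasFDerivAt {N : ℕ} {b : ℝ} (hb : 0 < b) (p : ℝ) (y : EuclideanSpace ℝ (Fin N)) :
    HasFDerivAt (bar b p) ((2 * p * (b + ‖y‖ ^ 2) ^ (p - 1)) • innerSL ℝ y) y := by
  have hn : HasFDerivAt (fun z : EuclideanSpace ℝ (Fin N) => b + ‖z‖ ^ 2)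
      ((2:ℕ) • innerSL ℝ y) y :=
    ((hasStrictFDerivAt_norm_sq y).hasFDerivAt).const_add b
  have hr : HasDerivAt (fun s : ℝ => s ^ p) (p * (b + ‖y‖ ^ 2) ^ (p - 1)) (b + ‖y‖ ^ 2) :=
    Real.hasDerivAt_rpow_const (Or.inl (ne_of_gt (base_pos hb y)))
  have := hr.comp_hasFDerivAt y hn
  refine this.congr_fderiv ?_
  ext v
  simp
  ring

lemma bar_fderiv_apply {N : ℕ} {b : ℝ} (hb : 0 < b) (p : ℝ) (y : EuclideanSpace ℝ (Fin N))
    (i : Fin N) :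
    fderiv ℝ (bar b p) y (EuclideanSpace.single i 1)
      = 2 * p * (b + ‖y‖ ^ 2) ^ (p - 1) * y i := by
  rw [(bar_hasFDerivAt hb p y).fderiv]
  simp [EuclideanSpace.inner_single_right, real_inner_comm]

lemma coord_hasFDerivAt {N : ℕ} (i : Fin N) (x : EuclideanSpace ℝ (Fin N)) :
    HasFDerivAt (fun y : EuclideanSpace ℝ (Fin N) => y i)
      (EuclideanSpace.proj i : EuclideanSpace ℝ (Fin N) →L[ℝ] ℝ) x :=
  (EuclideanSpace.proj i : EuclideanSpace ℝ (Fin N) →L[ℝ] ℝ).hasFDerivAt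

lemma lap_bar {N : ℕ} {b : ℝ} (hb : 0 < b) (p : ℝ) (x : EuclideanSpace ℝ (Fin N)) :
    lap (bar b p) x = 4 * p * (p - 1) * (b + ‖x‖ ^ 2) ^ (p - 2) * ‖x‖ ^ 2
      + 2 * N * p * (b + ‖x‖ ^ 2) ^ (p - 1) := by
  have key : ∀ i : Fin N,
      fderiv ℝ (fun y => fderiv ℝ (bar b p) y (EuclideanSpace.single i 1)) x
        (EuclideanSpace.single i 1)
      = 4 * p * (p - 1) * (b + ‖x‖ ^ 2) ^ (p - 2) * (x i) ^ 2
        + 2 * p * (b + ‖x‖ ^ 2) ^ (p - 1) := by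
    intro i
    have hfun : (fun y : EuclideanSpace ℝ (Fin N) => fderiv ℝ (bar b p) y (EuclideanSpace.single i 1))
        = fun y => 2 * p * ((b + ‖y‖ ^ 2) ^ (p - 1) * y i) := by
      funext y
      rw [bar_fderiv_apply hb p y i]
      ring
    rw [hfun]
    -- derivative of the product
    have h1 : HasFDerivAt (fun y : EuclideanSpace ℝ (Fin N) => (b + ‖y‖ ^ 2) ^ (p - 1))
        ((2 * (p-1) * (b + ‖x‖ ^ 2) ^ (p - 1 - 1)) • innerSL ℝ x) x := bar_hasFDerivAt hb (p-1) x
    have h2 := coord_hasFDerivAt i x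
    have hprod := (h1.mul h2).const_mul (2 * p)
    rw [(show HasFDerivAt (fun y : EuclideanSpace ℝ (Fin N) => 2 * p * ((b + ‖y‖ ^ 2) ^ (p - 1) * y i)) _ x from hprod).fderiv]
    have hx : ((innerSL ℝ) x) (EuclideanSpace.single i 1) = x i := by
      simp [EuclideanSpace.inner_single_right, real_inner_comm]
    simp [hx]
    have : p - 1 - 1 = p - 2 := by ring
    rw [this]
    ring
  have hsum : ∑ i : Fin N, (x i) ^ 2 = ‖x‖ ^ 2 := by
    rw [EuclideanSpace.norm_eq]
    rw [Real.sq_sqrt (by positivity)]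
    simp [sq_abs]
  unfold lap
  rw [Finset.sum_congr rfl (fun i _ => key i)]
  rw [Finset.sum_add_distrib, Finset.sum_const, Finset.card_univ, Fintype.card_fin,
    ← Finset.mul_sum, hsum, nsmul_eq_mul]
  ring


lemma lap_combo {N : ℕ} {w φ ψ : EuclideanSpace ℝ (Fin N) → ℝ}
    (hw : ContDiff ℝ 2 w) (hφ : ContDiff ℝ 2 φ) (hψ : ContDiff ℝ 2 ψ) (a c : ℝ)
    (x : EuclideanSpace ℝ (Fin N)) :
    lap (fun y => w y - a * φ y - c * ψ y) x = lap w x - a * lap φ x - c * lap ψ x := by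
  have hwd : Differentiable ℝ w := hw.differentiable (by norm_num)
  have hφd : Differentiable ℝ φ := hφ.differentiable (by norm_num)
  have hψd : Differentiable ℝ ψ := hψ.differentiable (by norm_num)
  unfold lap
  rw [Finset.mul_sum, Finset.mul_sum, ← Finset.sum_sub_distrib, ← Finset.sum_sub_distrib]
  apply Finset.sum_congr rfl
  intro i _
  set e : EuclideanSpace ℝ (Fin N) := EuclideanSpace.single i 1 with he
  have hfun : (fun y => fderiv ℝ (fun z => w z - a * φ z - c * ψ z) y e)
      = fun y => fderiv ℝ w y e - a * fderiv ℝ φ y e - c * fderiv ℝ ψ y e := by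
    funext y
    rw [fderiv_fun_sub (f := fun z => w z - a * φ z) (((hwd y).sub ((hφd y).const_mul a))) ((hψd y).const_mul c),
      fderiv_fun_sub (hwd y) ((hφd y).const_mul a), fderiv_const_mul (hφd y) a,
      fderiv_const_mul (hψd y) c]
    simp
  rw [hfun]
  have h1 : DifferentiableAt ℝ (fun y => fderiv ℝ w y e) x :=
    ((fderiv_apply_contDiff hw e).differentiable (by norm_num)) x
  have h2 : DifferentiableAt ℝ (fun y => fderiv ℝ φ y e) x :=
    ((fderiv_apply_contDiff hφ e).differentiable (by norm_num)) x
  have h3 : DifferentiableAt ℝ (fun y => fderiv ℝ ψ y e) x :=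
    ((fderiv_apply_contDiff hψ e).differentiable (by norm_num)) x
  rw [fderiv_fun_sub (f := fun y => fderiv ℝ w y e - a * fderiv ℝ φ y e) (h1.sub (h2.const_mul a)) (h3.const_mul c),
    fderiv_fun_sub h1 (h2.const_mul a), fderiv_const_mul h2 a, fderiv_const_mul h3 c]
  simp









/-- Choice of `b` making the barrier Laplacian dominated by the barrier. -/
lemma barrier_bound (N : ℕ) (p : ℝ) : ∃ b : ℝ, 1 ≤ b ∧
    ∀ x : EuclideanSpace ℝ (Fin N), |lap (bar b p) x| ≤ bar b p x := by
  set A : ℝ := 4 * |p| * |p - 1| + 2 * N * |p| with hA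
  have hA0 : 0 ≤ A := by positivity
  refine ⟨1 + A, by linarith, fun x => ?_⟩
  have hb : (0:ℝ) < 1 + A := by linarith
  set s : ℝ := ‖x‖ ^ 2 with hs
  have hs0 : 0 ≤ s := by positivity
  set z : ℝ := 1 + A + s with hz
  have hz0 : (0:ℝ) < z := by linarith
  have hz1 : z ^ (p - 2) * z = z ^ (p - 1) := by
    rw [show p - 1 = p - 2 + 1 by ring, Real.rpow_add_one (ne_of_gt hz0)]
  have hz2 : z ^ (p - 1) * z = z ^ p := by
    rw [show p = p - 1 + 1 by ring, Real.rpow_add_one (ne_of_gt hz0)]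
    rw [show p - 1 + 1 = p by ring]
  have hp2 : (0:ℝ) < z ^ (p - 2) := Real.rpow_pos_of_pos hz0 _
  have hp1 : (0:ℝ) < z ^ (p - 1) := Real.rpow_pos_of_pos hz0 _
  rw [lap_bar hb p x]
  have hbar : bar (1 + A) p x = z ^ p := rfl
  rw [hbar]
  have htri : |4 * p * (p - 1) * z ^ (p - 2) * s + 2 * N * p * z ^ (p - 1)|
      ≤ 4 * |p| * |p - 1| * (z ^ (p - 2) * s) + 2 * N * |p| * z ^ (p - 1) := by
    refine (abs_add_le _ _).trans ?_
    have h1 : |4 * p * (p - 1) * z ^ (p - 2) * s| = 4 * |p| * |p-1| * (z ^ (p - 2) * s) := by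
      simp [abs_mul, abs_of_nonneg hs0, abs_of_pos hp2, abs_sub_comm]
      all_goals ring
    have h2 : |2 * (N:ℝ) * p * z ^ (p - 1)| = 2 * N * |p| * z ^ (p - 1) := by
      simp [abs_mul, abs_of_pos hp1, Nat.abs_cast]
      all_goals ring
    rw [h1, h2]
  refine htri.trans ?_
  have hst : z ^ (p - 2) * s ≤ z ^ (p - 1) := by
    rw [← hz1]
    have : s ≤ z := by linarith
    nlinarith
  have hfin : A * z ^ (p - 1) ≤ z ^ p := by
    rw [← hz2]
    have : A ≤ z := by linarith
    nlinarith
  nlinarith [mul_le_mul_of_nonneg_left hst (by positivity : (0:ℝ) ≤ 4 * |p| * |p-1|),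
    mul_le_mul_of_nonneg_left hp1.le (by positivity : (0:ℝ) ≤ 2 * (N:ℝ) * |p|)]

/-- Comparability of the barrier with the standard weight. -/
lemma bar_comp {N : ℕ} {b : ℝ} (hb : 1 ≤ b) (p : ℝ) (x : EuclideanSpace ℝ (Fin N)) :
    (1 + ‖x‖ ^ 2) ^ p ≤ b ^ |p| * bar b p x ∧
      bar b p x ≤ b ^ |p| * (1 + ‖x‖ ^ 2) ^ p := by
  have hb0 : (0:ℝ) < b := by linarith
  set s : ℝ := ‖x‖ ^ 2 with hs
  have hs0 : 0 ≤ s := by positivity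
  have h1 : (0:ℝ) < 1 + s := by linarith
  have h2 : (0:ℝ) < b + s := by linarith
  have hle : 1 + s ≤ b + s := by linarith
  have hle2 : b + s ≤ b * (1 + s) := by nlinarith
  have hbp : (1:ℝ) ≤ b ^ |p| := Real.one_le_rpow hb (abs_nonneg p)
  have hbppos : (0:ℝ) < b ^ p := Real.rpow_pos_of_pos hb0 p
  have hbar : bar b p x = (b + s) ^ p := rfl
  have hmul : (b * (1 + s)) ^ p = b ^ p * (1 + s) ^ p := Real.mul_rpow hb0.le h1.le
  rcases le_or_gt 0 p with hp | hp
  · constructor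
    · calc (1 + s) ^ p ≤ (b + s) ^ p := Real.rpow_le_rpow h1.le hle hp
        _ = 1 * (b + s) ^ p := (one_mul _).symm
        _ ≤ b ^ |p| * bar b p x := by
            rw [hbar]
            exact mul_le_mul_of_nonneg_right hbp (Real.rpow_pos_of_pos h2 p).le
    · rw [hbar]
      calc (b + s) ^ p ≤ (b * (1 + s)) ^ p := Real.rpow_le_rpow h2.le hle2 hp
        _ = b ^ p * (1 + s) ^ p := hmul
        _ ≤ b ^ |p| * (1 + s) ^ p := by
            exact mul_le_mul_of_nonneg_right
              (Real.rpow_le_rpow_of_exponent_le hb (le_abs_self p))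
              (Real.rpow_pos_of_pos h1 p).le
  · have habs : |p| = -p := abs_of_neg hp
    constructor
    · have key : b ^ p * (1 + s) ^ p ≤ (b + s) ^ p := by
        rw [← hmul]
        exact Real.rpow_le_rpow_of_nonpos h2 hle2 hp.le
      rw [hbar, habs, Real.rpow_neg hb0.le, inv_mul_eq_div, le_div_iff₀ hbppos]
      nlinarith [key]
    · rw [hbar]
      calc (b + s) ^ p ≤ (1 + s) ^ p := Real.rpow_le_rpow_of_nonpos h1 hle hp.le
        _ = 1 * (1 + s) ^ p := (one_mul _).symm
        _ ≤ b ^ |p| * (1 + s) ^ p :=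
            mul_le_mul_of_nonneg_right hbp (Real.rpow_pos_of_pos h1 p).le







/-- A continuous function which is eventually below `u 0 - 1` attains its maximum. -/
lemma exists_max {N : ℕ} (u : EuclideanSpace ℝ (Fin N) → ℝ) (hc : Continuous u)
    (h : ∃ R : ℝ, ∀ x, R ≤ ‖x‖ ^ 2 → u x ≤ u 0 - 1) : ∃ x₀, ∀ x, u x ≤ u x₀ := by
  obtain ⟨R, hR⟩ := h
  set r : ℝ := Real.sqrt (max R 0) with hr
  have hball : (0 : EuclideanSpace ℝ (Fin N)) ∈ Metric.closedBall 0 r := by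
    rw [Metric.mem_closedBall, dist_self]
    exact Real.sqrt_nonneg _
  obtain ⟨x₀, hx₀mem, hx₀⟩ := (isCompact_closedBall (0 : EuclideanSpace ℝ (Fin N)) r).exists_isMaxOn
    ⟨0, hball⟩ hc.continuousOn
  refine ⟨x₀, fun x => ?_⟩
  by_cases hx : x ∈ Metric.closedBall (0 : EuclideanSpace ℝ (Fin N)) r
  · exact hx₀ hx
  · have hx' : r < ‖x‖ := by
      simpa [Metric.mem_closedBall, dist_zero_right, not_le] using hx
    have hxR : R ≤ ‖x‖ ^ 2 := by
      nlinarith [Real.sq_sqrt (le_max_right R 0), Real.sqrt_nonneg (max R 0),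
        le_max_left R 0, norm_nonneg x]
    calc u x ≤ u 0 - 1 := hR x hxR
      _ ≤ u 0 := by linarith
      _ ≤ u x₀ := hx₀ hball

/-- One-sided comparison via the maximum principle. -/
lemma one_sided {N : ℕ} {b b' p q : ℝ} (hb : 1 ≤ b) (hb' : 1 ≤ b')
    (hblap : ∀ x, |lap (bar (N := N) b p) x| ≤ bar b p x)
    (hb'lap : ∀ x, |lap (bar (N := N) b' q) x| ≤ bar b' q x)
    {ε : ℝ} (hε : ε ∈ Set.Ioo (0:ℝ) 1)
    {w : EuclideanSpace ℝ (Fin N) → ℝ} (hw : ContDiff ℝ 2 w)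
    {a m : ℝ} (ha : 0 ≤ a)
    (hwb : ∀ y, w y ≤ m * bar b p y)
    (hLw : ∀ y, -(a * bar b p y) ≤ ε ^ 2 * lap w y - 2 * w y)
    (hgrow : ∀ η : ℝ, 0 < η → ∀ C₀ : ℝ, ∃ R : ℝ, ∀ y : EuclideanSpace ℝ (Fin N),
        R ≤ ‖y‖ ^ 2 → m * bar b p y - η * bar b' q y ≤ -(C₀ + 1)) :
    ∀ y, w y ≤ a * bar b p y := by
  have hb0 : (0:ℝ) < b := by linarith
  have hb'0 : (0:ℝ) < b' := by linarith
  have key : ∀ η : ℝ, 0 < η → ∀ y, w y ≤ a * bar b p y + η * bar b' q y := by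
    intro η hη
    set u : EuclideanSpace ℝ (Fin N) → ℝ := fun y => w y - a * bar b p y - η * bar b' q y
      with hu
    have hucd : ContDiff ℝ 2 u :=
      (hw.sub (contDiff_const.mul (bar_contDiff hb0 p))).sub
        (contDiff_const.mul (bar_contDiff hb'0 q))
    -- strict subsolution property
    have hstrict : ∀ y, 0 < ε ^ 2 * lap u y - 2 * u y := by
      intro y
      have hlapu : lap u y = lap w y - a * lap (bar b p) y - η * lap (bar b' q) y :=
        lap_combo hw (bar_contDiff hb0 p) (bar_contDiff hb'0 q) a η y
      have hε2 : ε ^ 2 ≤ 1 := by nlinarith [hε.1, hε.2]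
      have hε20 : 0 ≤ ε ^ 2 := sq_nonneg ε
      have hφb := abs_le.mp (hblap y)
      have hψb := abs_le.mp (hb'lap y)
      have hφpos := bar_pos hb0 p y
      have hψpos := bar_pos hb'0 q y
      have h1 : ε ^ 2 * lap (bar b p) y ≤ bar b p y := by
        calc ε ^ 2 * lap (bar b p) y ≤ ε ^ 2 * |lap (bar b p) y| :=
              mul_le_mul_of_nonneg_left (le_abs_self _) hε20
          _ ≤ 1 * |lap (bar b p) y| := mul_le_mul_of_nonneg_right hε2 (abs_nonneg _)
          _ = |lap (bar b p) y| := one_mul _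
          _ ≤ bar b p y := hblap y
      have h2 : ε ^ 2 * lap (bar b' q) y ≤ bar b' q y := by
        calc ε ^ 2 * lap (bar b' q) y ≤ ε ^ 2 * |lap (bar b' q) y| :=
              mul_le_mul_of_nonneg_left (le_abs_self _) hε20
          _ ≤ 1 * |lap (bar b' q) y| := mul_le_mul_of_nonneg_right hε2 (abs_nonneg _)
          _ = |lap (bar b' q) y| := one_mul _
          _ ≤ bar b' q y := hb'lap y
      have h3 := hLw y
      have hexpand : ε ^ 2 * lap u y - 2 * u y
          = (ε ^ 2 * lap w y - 2 * w y) - a * (ε ^ 2 * lap (bar b p) y)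
            + 2 * a * bar b p y - η * (ε ^ 2 * lap (bar b' q) y) + 2 * η * bar b' q y := by
        rw [hlapu, hu]; ring
      rw [hexpand]
      nlinarith [mul_le_mul_of_nonneg_left h1 ha, mul_le_mul_of_nonneg_left h2 hη.le,
        mul_pos hη hψpos, mul_nonneg ha hφpos.le]
    -- decay at infinity
    have hdecay : ∃ R : ℝ, ∀ y, R ≤ ‖y‖ ^ 2 → u y ≤ u 0 - 1 := by
      obtain ⟨R, hR⟩ := hgrow η hη (|u 0|)
      refine ⟨R, fun y hy => ?_⟩
      have h1 : u y ≤ m * bar b p y - η * bar b' q y := by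
        have := hwb y
        have := mul_nonneg ha (bar_pos hb0 p y).le
        simp only [hu]
        linarith
      have h2 := hR y hy
      have : -(|u 0| + 1) ≤ u 0 - 1 := by
        have := neg_abs_le (u 0)
        linarith
      linarith
    obtain ⟨x₀, hx₀⟩ := exists_max u hucd.continuous hdecay
    have hlapneg := lap_nonpos_of_max hucd hx₀
    have hstrict₀ := hstrict x₀
    have hε20 : 0 ≤ ε ^ 2 := sq_nonneg ε
    have humax : u x₀ < 0 := by nlinarith
    intro y
    have : u y ≤ u x₀ := hx₀ y
    have : u y < 0 := lt_of_le_of_lt this humax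
    simp only [hu] at this
    linarith
  intro y
  by_contra hcon
  push_neg at hcon
  have hψpos := bar_pos hb'0 q y
  have hη : 0 < (w y - a * bar b p y) / (2 * bar b' q y) := by
    apply div_pos (by linarith) (by linarith)
  have hkey := key _ hη y
  have h2 : (w y - a * bar b p y) / (2 * bar b' q y) * bar b' q y
      = (w y - a * bar b p y) / 2 := by
    field_simp
  rw [h2] at hkey
  linarith

lemma lap_neg {N : ℕ} {u : EuclideanSpace ℝ (Fin N) → ℝ} (hu : ContDiff ℝ 2 u)
    (x : EuclideanSpace ℝ (Fin N)) : lap (fun y => -u y) x = -lap u x := by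
  have h := lap_combo (w := fun _ => (0:ℝ)) contDiff_const hu hu 1 0 x
  have hz : lap (N := N) (fun _ => (0:ℝ)) x = 0 := by
    unfold lap
    simp
  simp only [one_mul, zero_mul, sub_zero] at h
  have : (fun y : EuclideanSpace ℝ (Fin N) => (0:ℝ) - u y) = fun y => -u y := by
    funext y; ring
  rw [this] at h
  rw [h, hz]
  ring


/-- **Proposition 9.1** (`L^∞` part) : the uniform weighted a priori estimate
`sup (1+|x|²)^{-ν/2}|w| ≤ C sup (1+|x|²)^{-ν/2}|ε²Δw - 2w|` for the strongly coercive
operator `ε²Δ - 2`, with `C` independent of `ε ∈ (0,1)`. -/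
theorem coercive_operator_weighted_estimate (N : ℕ) (hN : 1 ≤ N) (ν : ℝ) :
    ∃ C : ℝ, 0 < C ∧ ∀ ε : ℝ, ε ∈ Set.Ioo (0 : ℝ) 1 →
      ∀ w : EuclideanSpace ℝ (Fin N) → ℝ, ContDiff ℝ 2 w →
        (∃ M : ℝ, ∀ x, (1 + ‖x‖ ^ 2) ^ (-ν / 2 : ℝ) * |w x| ≤ M) →
        ∀ K : ℝ,
          (∀ x, (1 + ‖x‖ ^ 2) ^ (-ν / 2 : ℝ) * |ε ^ 2 * lap w x - 2 * w x| ≤ K) →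
          ∀ x, (1 + ‖x‖ ^ 2) ^ (-ν / 2 : ℝ) * |w x| ≤ C * K := by
  set p : ℝ := ν / 2 with hp
  set r : ℝ := max p 0 with hr
  set q : ℝ := r + 1 with hq
  obtain ⟨b, hb1, hblap⟩ := barrier_bound N p
  obtain ⟨b', hb'1, hb'lap⟩ := barrier_bound N q
  have hb0 : (0:ℝ) < b := by linarith
  have hb'0 : (0:ℝ) < b' := by linarith
  set c₂ : ℝ := b ^ |p| with hc₂
  have hc₂1 : (1:ℝ) ≤ c₂ := Real.one_le_rpow hb1 (abs_nonneg p)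
  have hc₂0 : (0:ℝ) < c₂ := by linarith
  set T : ℝ := b' ^ |q| with hT
  have hT1 : (1:ℝ) ≤ T := Real.one_le_rpow hb'1 (abs_nonneg q)
  have hT0 : (0:ℝ) < T := by linarith
  refine ⟨c₂ * c₂, by positivity, ?_⟩
  rintro ε hε w hw ⟨M, hM⟩ K hK x
  -- basic weight facts
  have h1s : ∀ y : EuclideanSpace ℝ (Fin N), (0:ℝ) < 1 + ‖y‖ ^ 2 := fun y => by positivity
  have hwgt : ∀ y : EuclideanSpace ℝ (Fin N),
      (1 + ‖y‖ ^ 2 : ℝ) ^ (-ν / 2 : ℝ) = ((1 + ‖y‖ ^ 2 : ℝ) ^ p)⁻¹ := by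
    intro y
    rw [show (-ν / 2 : ℝ) = -p by rw [hp]; ring, Real.rpow_neg (h1s y).le]
  have hwgtpos : ∀ y : EuclideanSpace ℝ (Fin N), (0:ℝ) < (1 + ‖y‖ ^ 2 : ℝ) ^ p :=
    fun y => Real.rpow_pos_of_pos (h1s y) p
  have hM0 : 0 ≤ M := le_trans (by positivity) (hM 0)
  have hK0 : 0 ≤ K := le_trans (by positivity) (hK 0)
  -- pointwise bounds in terms of the barrier
  have hMbar : ∀ y, |w y| ≤ M * c₂ * bar b p y := by
    intro y
    have h := hM y
    rw [hwgt y] at h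
    have h' : |w y| ≤ M * (1 + ‖y‖ ^ 2) ^ p := by
      rw [inv_mul_le_iff₀ (hwgtpos y)] at h
      linarith [h]
    calc |w y| ≤ M * (1 + ‖y‖ ^ 2) ^ p := h'
      _ ≤ M * (c₂ * bar b p y) :=
          mul_le_mul_of_nonneg_left (bar_comp hb1 p y).1 hM0
      _ = M * c₂ * bar b p y := by ring
  have hKbar : ∀ y, |ε ^ 2 * lap w y - 2 * w y| ≤ K * c₂ * bar b p y := by
    intro y
    have h := hK y
    rw [hwgt y] at h
    have h' : |ε ^ 2 * lap w y - 2 * w y| ≤ K * (1 + ‖y‖ ^ 2) ^ p := by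
      rw [inv_mul_le_iff₀ (hwgtpos y)] at h
      linarith [h]
    calc |ε ^ 2 * lap w y - 2 * w y| ≤ K * (1 + ‖y‖ ^ 2) ^ p := h'
      _ ≤ K * (c₂ * bar b p y) :=
          mul_le_mul_of_nonneg_left (bar_comp hb1 p y).1 hK0
      _ = K * c₂ * bar b p y := by ring
  -- growth hypothesis for the maximum principle
  have hgrow : ∀ η : ℝ, 0 < η → ∀ C₀ : ℝ, ∃ R : ℝ, ∀ y : EuclideanSpace ℝ (Fin N),
      R ≤ ‖y‖ ^ 2 → M * c₂ * bar b p y - η * bar b' q y ≤ -(C₀ + 1) := by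
    intro η hη C₀
    set D : ℝ := max C₀ 0 with hD
    refine ⟨T / η * (M * c₂ * c₂ + D + 1), fun y hy => ?_⟩
    set s : ℝ := ‖y‖ ^ 2 with hs
    have hs0 : (0:ℝ) ≤ s := by positivity
    have h1 : bar b p y ≤ c₂ * (1 + s) ^ p := (bar_comp hb1 p y).2
    have h2 : (1 + s) ^ q ≤ T * bar b' q y := (bar_comp hb'1 q y).1
    have h2' : (1 + s) ^ q / T ≤ bar b' q y := by
      rw [div_le_iff₀ hT0]
      nlinarith [bar_pos hb'0 q y]
    have hpr : (1 + s) ^ p ≤ (1 + s) ^ r :=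
      Real.rpow_le_rpow_of_exponent_le (by linarith) (le_max_left p 0)
    have hqr : (1 + s) ^ q = (1 + s) ^ r * (1 + s) :=
      Real.rpow_add_one (by positivity) r
    have hr1 : (1:ℝ) ≤ (1 + s) ^ r :=
      Real.one_le_rpow (by linarith) (le_max_right p 0)
    have hbig : M * c₂ * c₂ + D + 1 ≤ η / T * (1 + s) := by
      rw [div_mul_eq_mul_div, le_div_iff₀ hT0]
      have h1' : η * (T / η * (M * c₂ * c₂ + D + 1)) ≤ η * s :=
        mul_le_mul_of_nonneg_left hy hη.le
      have h2' : η * (T / η * (M * c₂ * c₂ + D + 1)) = (M * c₂ * c₂ + D + 1) * T := by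
        field_simp
      nlinarith [h1', h2']
    -- combine
    have hwpos := hwgtpos y
    have key : M * c₂ * bar b p y - η * bar b' q y
        ≤ (1 + s) ^ r * (M * c₂ * c₂ - η / T * (1 + s)) := by
      have e1 : M * c₂ * bar b p y ≤ M * c₂ * (c₂ * (1 + s) ^ p) :=
        mul_le_mul_of_nonneg_left h1 (by positivity)
      have e2 : (1 + s) ^ q / T ≤ bar b' q y := h2'
      have e3 : M * c₂ * (c₂ * (1 + s) ^ p) ≤ M * c₂ * c₂ * (1 + s) ^ r := by
        linarith [mul_le_mul_of_nonneg_left hpr (by positivity : (0:ℝ) ≤ M * c₂ * c₂)]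
      have e4 : η * ((1 + s) ^ q / T) ≤ η * bar b' q y :=
        mul_le_mul_of_nonneg_left e2 hη.le
      have e5 : η * ((1 + s) ^ q / T) = (1 + s) ^ r * (η / T * (1 + s)) := by
        rw [hqr]; ring
      have expand : (1 + s) ^ r * (M * c₂ * c₂ - η / T * (1 + s))
          = M * c₂ * c₂ * (1 + s) ^ r - (1 + s) ^ r * (η / T * (1 + s)) := by ring
      linarith [e1, e3, e4, e5, expand]
    have hDneg : M * c₂ * c₂ - η / T * (1 + s) ≤ -(D + 1) := by linarith
    have hX : M * c₂ * c₂ - η / T * (1 + s) ≤ 0 := by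
      have : 0 ≤ D := le_max_right C₀ 0
      linarith
    have : (1 + s) ^ r * (M * c₂ * c₂ - η / T * (1 + s)) ≤ -(D + 1) := by
      have hmm : (1 + s) ^ r * (M * c₂ * c₂ - η / T * (1 + s))
          ≤ 1 * (M * c₂ * c₂ - η / T * (1 + s)) := mul_le_mul_of_nonpos_right hr1 hX
      linarith
    have hDD : -(D + 1) ≤ -(C₀ + 1) := by
      have : C₀ ≤ D := le_max_left C₀ 0
      linarith
    linarith
  -- apply the one-sided estimate to `w` and `-w`
  have hup := one_sided hb1 hb'1 hblap hb'lap hε hw (a := K * c₂) (m := M * c₂)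
    (by positivity)
    (fun y => (abs_le.mp (hMbar y)).2)
    (fun y => (abs_le.mp (hKbar y)).1)
    hgrow
  have hdown := one_sided hb1 hb'1 hblap hb'lap hε hw.neg (a := K * c₂) (m := M * c₂)
    (by positivity)
    (fun y => by
      have := (abs_le.mp (hMbar y)).1
      show -w y ≤ M * c₂ * bar b p y
      linarith)
    (fun y => by
      have h := (abs_le.mp (hKbar y)).2
      have hln : lap (-w) y = -lap w y := by
        have := lap_neg hw y
        exact this
      show -(K * c₂ * bar b p y) ≤ ε ^ 2 * lap (-w) y - 2 * (-w) y
      rw [hln, show (-w) y = -w y from rfl]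
      nlinarith [h])
    hgrow
  -- conclude
  have habs : |w x| ≤ K * c₂ * bar b p x := by
    rw [abs_le]
    constructor
    · have := hdown x
      linarith
    · exact hup x
  have hfin : |w x| ≤ c₂ * c₂ * K * (1 + ‖x‖ ^ 2) ^ p := by
    calc |w x| ≤ K * c₂ * bar b p x := habs
      _ ≤ K * c₂ * (c₂ * (1 + ‖x‖ ^ 2) ^ p) :=
          mul_le_mul_of_nonneg_left (bar_comp hb1 p x).2 (by positivity)
      _ = c₂ * c₂ * K * (1 + ‖x‖ ^ 2) ^ p := by ring
  rw [hwgt x, inv_mul_le_iff₀ (hwgtpos x)]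
  calc |w x| ≤ c₂ * c₂ * K * (1 + ‖x‖ ^ 2) ^ p := hfin
    _ = (1 + ‖x‖ ^ 2) ^ p * (c₂ * c₂ * K) := by ring
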